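/- arXiv:2408.13022 — 2 statements merged into one kernel-verified Lean document; each statement's English description precedes it below -/
import Mathlib

section
/- For any positive probability density π on Z, the SARIS asymptotic variance V(π) = (1/c1²) E_π[((f0(Z) - r* f1(Z))/π(Z))²] satisfies V(π) ≥ r*² (∫ |p1(z) - p0(z)| μ(dz))², with equality when π(z) ∝ |f0(z) - r* f1(z)| (assuming ∫|f0 - r* f1| dμ > 0). -/
open MeasureTheory

/-- The SARIS asymptotic variance
V(π) = (1/c1²) E_π[((f0 - r* f1)/π)²] satisfies
V(π) ≥ r*² (∫ |p1 - p0| dμ)², with equality for π ∝ |f0 - r* f1|. -/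
theorem saris_optimal_variance
    {Z : Type*} [MeasurableSpace Z] (μ : Measure Z) [SigmaFinite μ]
    (f0 f1 π : Z → ℝ)
    (hf0pos : ∀ z, 0 < f0 z) (hf1pos : ∀ z, 0 < f1 z)
    (hf0int : Integrable f0 μ) (hf1int : Integrable f1 μ)
    (c0 c1 : ℝ) (hc0 : c0 = ∫ z, f0 z ∂μ) (hc1 : c1 = ∫ z, f1 z ∂μ)
    (hc0pos : 0 < c0) (hc1pos : 0 < c1)
    (hπpos : ∀ z, 0 < π z) (hπprob : ∫ z, π z ∂μ = 1)
    (hint : Integrable (fun z => ((f0 z - (c0 / c1) * f1 z) / π z) ^ 2 * π z) μ)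
    (habs : Integrable (fun z => |f0 z - (c0 / c1) * f1 z|) μ)
    (habspos : 0 < ∫ z, |f0 z - (c0 / c1) * f1 z| ∂μ) :
    (1 / c1 ^ 2) * ∫ z, ((f0 z - (c0 / c1) * f1 z) / π z) ^ 2 * π z ∂μ ≥
      (c0 / c1) ^ 2 * (∫ z, |f1 z / c1 - f0 z / c0| ∂μ) ^ 2 ∧
    ((∀ z, π z = |f0 z - (c0 / c1) * f1 z| / ∫ w, |f0 w - (c0 / c1) * f1 w| ∂μ) →
      (1 / c1 ^ 2) * ∫ z, ((f0 z - (c0 / c1) * f1 z) / π z) ^ 2 * π z ∂μ =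
        (c0 / c1) ^ 2 * (∫ z, |f1 z / c1 - f0 z / c0| ∂μ) ^ 2) := by
  have hc1ne : c1 ≠ 0 := ne_of_gt hc1pos
  have hc0ne : c0 ≠ 0 := ne_of_gt hc0pos
  set g : Z → ℝ := fun z => f0 z - (c0 / c1) * f1 z with hgdef
  set N : ℝ := ∫ z, |g z| ∂μ with hNdef
  have hNpos : 0 < N := habspos
  have hπint : Integrable π μ := by
    by_contra h
    rw [integral_undef h] at hπprob
    norm_num at hπprob
  have habs_rw : (∫ z, |f1 z / c1 - f0 z / c0| ∂μ) = N / c0 := by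
    have hpt : ∀ z, |f1 z / c1 - f0 z / c0| = |g z| / c0 := by
      intro z
      have h1 : f1 z / c1 - f0 z / c0 = -(g z) / c0 := by
        simp only [hgdef]
        field_simp
        ring
      rw [h1, abs_div, abs_neg, abs_of_pos hc0pos]
    simp only [hpt]
    rw [integral_div]
  have hrhs : (c0 / c1) ^ 2 * (∫ z, |f1 z / c1 - f0 z / c0| ∂μ) ^ 2
      = (1 / c1 ^ 2) * N ^ 2 := by
    rw [habs_rw]
    field_simp
  set F : Z → ℝ := fun z => (g z / π z) ^ 2 * π z with hFdef
  have hkey : ∀ z, (|g z| / π z - N) ^ 2 * π z = F z - 2 * N * |g z| + N ^ 2 * π z := by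
    intro z
    have hπne : π z ≠ 0 := ne_of_gt (hπpos z)
    have h1 : (|g z| / π z - N) ^ 2 * π z
        = |g z| ^ 2 / π z - 2 * N * |g z| + N ^ 2 * π z := by
      field_simp
      ring
    have h2 : F z = g z ^ 2 / π z := by
      simp only [hFdef]
      field_simp
    rw [h1, h2, sq_abs]
  have hint1 : Integrable (fun z => 2 * N * |g z|) μ := habs.const_mul (2 * N)
  have hint2 : Integrable (fun z => N ^ 2 * π z) μ := hπint.const_mul (N ^ 2)
  have heq : (∫ z, (|g z| / π z - N) ^ 2 * π z ∂μ) = (∫ z, F z ∂μ) - N ^ 2 := by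
    calc (∫ z, (|g z| / π z - N) ^ 2 * π z ∂μ)
        = ∫ z, (F z - 2 * N * |g z| + N ^ 2 * π z) ∂μ := by
          apply integral_congr_ae
          filter_upwards with z using hkey z
      _ = ((∫ z, F z ∂μ) - ∫ z, 2 * N * |g z| ∂μ) + ∫ z, N ^ 2 * π z ∂μ := by
          have hA : Integrable (fun z => F z - 2 * N * |g z|) μ := hint.sub hint1
          rw [integral_add hA hint2, integral_sub hint hint1]
      _ = (∫ z, F z ∂μ) - N ^ 2 := by
          rw [integral_const_mul, integral_const_mul, hπprob, ← hNdef]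
          ring
  have hnn : 0 ≤ ∫ z, (|g z| / π z - N) ^ 2 * π z ∂μ :=
    integral_nonneg fun z => mul_nonneg (sq_nonneg _) (hπpos z).le
  have hineq : N ^ 2 ≤ ∫ z, F z ∂μ := by linarith [heq ▸ hnn]
  constructor
  · rw [hrhs]
    have h0 : (0:ℝ) ≤ 1 / c1 ^ 2 := by positivity
    exact mul_le_mul_of_nonneg_left hineq h0
  · intro hπeq
    rw [hrhs]
    have hFN : ∀ z, F z = N * |g z| := by
      intro z
      have hπz := hπpos z
      have hπz2 : π z = |g z| / N := hπeq z
      have hne : g z ≠ 0 := by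
        intro h0
        rw [hπz2] at hπz
        rw [show |g z| = |(0:ℝ)| from by rw [h0]] at hπz
        simp at hπz
      have habsne : |g z| ≠ 0 := abs_ne_zero.mpr hne
      simp only [hFdef]
      rw [hπz2]
      have hg2 : |g z| ^ 2 = g z ^ 2 := sq_abs _
      field_simp
      nlinarith [sq_abs (g z), abs_pos.mpr hne, hNpos]
    have : (∫ z, F z ∂μ) = N * N := by
      calc (∫ z, F z ∂μ) = ∫ z, N * |g z| ∂μ := by
            apply integral_congr_ae
            filter_upwards with z using hFN z
        _ = N * N := by rw [integral_const_mul, ← hNdef]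
    rw [this]
    ring
end

section
/- If μ({z : f0(z) = r f1(z)}) = 0 for all r and f1 is μ-essentially bounded, then the function c(r) = ∫ |f0(z) − r f1(z)| μ(dz) satisfies c(r) = −c0 + r c1 + 2 m(r) where m(r) = ∫_{A_r⁺} (f0 − r f1) dμ with A_r⁺ = {z : f0(z) > r f1(z)}; moreover m is differentiable with m'(r) = −∫_{A_r⁺} f1 dμ, and hence c'(r*) = c1 − 2∫_{A_{r*}⁺} f1 dμ. -/
open MeasureTheory

/-- If μ({f0 = r f1}) = 0 for all r and f1 is essentially bounded,
then c(r) = ∫|f0 − r f1| dμ = −c0 + r c1 + 2 m(r) with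
m(r) = ∫_{A_r⁺}(f0 − r f1) dμ, m is differentiable with
m'(r) = −∫_{A_r⁺} f1 dμ, and c'(r*) = c1 − 2∫_{A_{r*}⁺} f1 dμ. -/
theorem abs_normalizing_constant_differentiable
    {Z : Type*} [MeasurableSpace Z] (μ : Measure Z) [SigmaFinite μ]
    (f0 f1 : Z → ℝ)
    (hf0meas : Measurable f0) (hf1meas : Measurable f1)
    (hf0pos : ∀ z, 0 < f0 z) (hf1pos : ∀ z, 0 < f1 z)
    (hf0int : Integrable f0 μ) (hf1int : Integrable f1 μ)
    (c0 c1 : ℝ) (hc0 : c0 = ∫ z, f0 z ∂μ) (hc1 : c1 = ∫ z, f1 z ∂μ)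
    (hc0pos : 0 < c0) (hc1pos : 0 < c1)
    (f1bar : ℝ) (hf1bdd : ∀ᵐ z ∂μ, f1 z ≤ f1bar)
    (hnull : ∀ r : ℝ, μ {z | f0 z = r * f1 z} = 0) :
    (∀ r : ℝ, ∫ z, |f0 z - r * f1 z| ∂μ =
      -c0 + r * c1 + 2 * ∫ z in {z | f0 z > r * f1 z}, (f0 z - r * f1 z) ∂μ) ∧
    (∀ r : ℝ, HasDerivAt
      (fun s => ∫ z in {z | f0 z > s * f1 z}, (f0 z - s * f1 z) ∂μ)
      (-(∫ z in {z | f0 z > r * f1 z}, f1 z ∂μ)) r) ∧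
    HasDerivAt (fun s => ∫ z, |f0 z - s * f1 z| ∂μ)
      (c1 - 2 * ∫ z in {z | f0 z > (c0 / c1) * f1 z}, f1 z ∂μ) (c0 / c1) := by
  have hAmeas : ∀ r : ℝ, MeasurableSet {z | f0 z > r * f1 z} := fun r =>
    measurableSet_lt (hf1meas.const_mul r) hf0meas
  have hg_int : ∀ r : ℝ, Integrable (fun z => f0 z - r * f1 z) μ :=
    fun r => hf0int.sub (hf1int.const_mul r)
  have hmax_int : ∀ r : ℝ, Integrable (fun z => max (f0 z - r * f1 z) 0) μ :=
    fun r => (hg_int r).pos_part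
  have hind : ∀ (r : ℝ) z, Set.indicator {z | f0 z > r * f1 z}
      (fun z => f0 z - r * f1 z) z = max (f0 z - r * f1 z) 0 := by
    intro r z
    by_cases h : z ∈ {z | f0 z > r * f1 z}
    · rw [Set.indicator_of_mem h]
      exact (max_eq_left (sub_nonneg.2 (le_of_lt h))).symm
    · rw [Set.indicator_of_notMem h]
      exact (max_eq_right (sub_nonpos.2 (not_lt.1 h))).symm
  have hsetint : ∀ r : ℝ, ∫ z in {z | f0 z > r * f1 z}, (f0 z - r * f1 z) ∂μ
      = ∫ z, max (f0 z - r * f1 z) 0 ∂μ := by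
    intro r
    rw [← integral_indicator (hAmeas r)]
    exact integral_congr_ae (Filter.Eventually.of_forall (hind r))
  -- Part 1
  have h1 : ∀ r : ℝ, ∫ z, |f0 z - r * f1 z| ∂μ =
      -c0 + r * c1 + 2 * ∫ z, max (f0 z - r * f1 z) 0 ∂μ := by
    intro r
    have heq : (fun z => |f0 z - r * f1 z|)
        = fun z => 2 * max (f0 z - r * f1 z) 0 - (f0 z - r * f1 z) := by
      funext z
      rcases le_total 0 (f0 z - r * f1 z) with h | h
      · rw [abs_of_nonneg h, max_eq_left h]; ring
      · rw [abs_of_nonpos h, max_eq_right h]; ring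
    rw [heq, integral_sub ((hmax_int r).const_mul 2) (hg_int r), integral_const_mul,
      integral_sub hf0int (hf1int.const_mul r), integral_const_mul, ← hc0, ← hc1]
    ring
  -- derivative of m
  have hm : ∀ r : ℝ, HasDerivAt (fun s => ∫ z, max (f0 z - s * f1 z) 0 ∂μ)
      (-(∫ z in {z | f0 z > r * f1 z}, f1 z ∂μ)) r := by
    intro r
    have hF'meas : AEStronglyMeasurable
        (fun z => if f0 z > r * f1 z then -f1 z else 0) μ :=
      (Measurable.ite (hAmeas r) hf1meas.neg measurable_const).aestronglyMeasurable
    have hlip : ∀ z, LipschitzWith (Real.nnabs (f1 z))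
        (fun s : ℝ => max (f0 z - s * f1 z) 0) := by
      intro z
      apply LipschitzWith.of_dist_le_mul
      intro s t
      simp only [Real.dist_eq]
      calc |max (f0 z - s * f1 z) 0 - max (f0 z - t * f1 z) 0|
          ≤ |(f0 z - s * f1 z) - (f0 z - t * f1 z)| := abs_max_sub_max_le_abs _ _ 0
        _ = |f1 z * (t - s)| := by congr 1; ring
        _ = |f1 z| * |s - t| := by rw [abs_mul, abs_sub_comm]
        _ = ↑(Real.nnabs (f1 z)) * |s - t| := by
            rw [Real.coe_nnabs]
    have hdiff : ∀ᵐ z ∂μ, HasDerivAt (fun s : ℝ => max (f0 z - s * f1 z) 0)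
        ((fun z => if f0 z > r * f1 z then -f1 z else 0) z) r := by
      have h0 : ∀ᵐ z ∂μ, f0 z ≠ r * f1 z := by
        rw [ae_iff]
        simpa using hnull r
      filter_upwards [h0] with z hz
      rcases lt_or_gt_of_ne hz with h | h
      · -- f0 z < r * f1 z
        simp only [if_neg (not_lt.2 h.le)]
        have hcont : ContinuousAt (fun s : ℝ => f0 z - s * f1 z) r := by fun_prop
        have hev : ∀ᶠ s in nhds r, f0 z - s * f1 z ∈ Set.Iio (0 : ℝ) :=
          hcont (Iio_mem_nhds (sub_neg.2 h))
        have heq : (fun s : ℝ => max (f0 z - s * f1 z) 0) =ᶠ[nhds r] fun _ => 0 := by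
          filter_upwards [hev] with s hs
          exact max_eq_right (le_of_lt hs)
        exact (hasDerivAt_const r (0 : ℝ)).congr_of_eventuallyEq heq
      · -- f0 z > r * f1 z
        simp only [if_pos h]
        have hcont : ContinuousAt (fun s : ℝ => f0 z - s * f1 z) r := by fun_prop
        have hev : ∀ᶠ s in nhds r, f0 z - s * f1 z ∈ Set.Ioi (0 : ℝ) :=
          hcont (Ioi_mem_nhds (sub_pos.2 h))
        have heq : (fun s : ℝ => max (f0 z - s * f1 z) 0)
            =ᶠ[nhds r] fun s => f0 z - s * f1 z := by
          filter_upwards [hev] with s hs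
          exact max_eq_left (le_of_lt hs)
        have hbase : HasDerivAt (fun s : ℝ => f0 z - s * f1 z) (-f1 z) r := by
          simpa using (hasDerivAt_mul_const (f1 z)).const_sub (f0 z)
        exact hbase.congr_of_eventuallyEq heq
    have key := hasDerivAt_integral_of_dominated_loc_of_lip
      (F := fun (s : ℝ) z => max (f0 z - s * f1 z) 0)
      (F' := fun z => if f0 z > r * f1 z then -f1 z else 0)
      (bound := fun z => f1 z) (Metric.ball_mem_nhds r zero_lt_one)
      (Filter.Eventually.of_forall fun s =>
        ((hf0meas.sub (hf1meas.const_mul s)).max measurable_const).aestronglyMeasurable)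
      (hmax_int r) hF'meas
      (Filter.Eventually.of_forall fun z => (hlip z).lipschitzOnWith (s := Metric.ball r 1))
      hf1int hdiff
    have hF'val : ∫ z, (if f0 z > r * f1 z then -f1 z else 0) ∂μ
        = -(∫ z in {z | f0 z > r * f1 z}, f1 z ∂μ) := by
      rw [← integral_neg, ← integral_indicator (hAmeas r)]
      apply integral_congr_ae
      filter_upwards with z
      by_cases h : f0 z > r * f1 z
      · simp [Set.indicator_of_mem (h : z ∈ {z | f0 z > r * f1 z}), h]
      · simp [Set.indicator_of_notMem (h : z ∉ {z | f0 z > r * f1 z}), h]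
    rw [hF'val] at key
    exact key.2
  have hm' : ∀ r : ℝ, HasDerivAt
      (fun s => ∫ z in {z | f0 z > s * f1 z}, (f0 z - s * f1 z) ∂μ)
      (-(∫ z in {z | f0 z > r * f1 z}, f1 z ∂μ)) r := by
    intro r
    have : (fun s => ∫ z in {z | f0 z > s * f1 z}, (f0 z - s * f1 z) ∂μ)
        = fun s => ∫ z, max (f0 z - s * f1 z) 0 ∂μ := funext hsetint
    rw [this]
    exact hm r
  refine ⟨fun r => by rw [h1 r, hsetint r], hm', ?_⟩
  have hc : (fun s => ∫ z, |f0 z - s * f1 z| ∂μ)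
      = fun s => -c0 + s * c1 + 2 * ∫ z, max (f0 z - s * f1 z) 0 ∂μ := funext h1
  rw [hc]
  have hd : HasDerivAt
      (fun s : ℝ => -c0 + s * c1 + 2 * ∫ z, max (f0 z - s * f1 z) 0 ∂μ)
      (c1 + 2 * -(∫ z in {z | f0 z > (c0 / c1) * f1 z}, f1 z ∂μ)) (c0 / c1) := by
    have := ((hasDerivAt_const (c0 / c1) (-c0)).add
      (hasDerivAt_mul_const c1)).add ((hm (c0 / c1)).const_mul 2)
    simpa [Pi.add_def] using this
  convert hd using 1
  ring
end
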